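/- Let n ≥ 5 be an integer. Then the minimum over α ∈ [0,∞) of the function g(α) = (16 + 8(1 + 2/n)α + 3α²)/(4 + 3α) equals (8/3)(√(2 − 4/n) + 2/n). -/

import Mathlib

open Real

/-- For an integer `n ≥ 5`, the minimum over `α ∈ [0,∞)` of
`g(α) = (16 + 8(1 + 2/n)α + 3α²)/(4 + 3α)` equals `(8/3)(√(2 − 4/n) + 2/n)`. -/
theorem min_of_alpha_quotient (n : ℕ) (hn : 5 ≤ n) :
    IsLeast ((fun α : ℝ => (16 + 8 * (1 + 2 / (n : ℝ)) * α + 3 * α ^ 2) / (4 + 3 * α)) ''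
        Set.Ici 0)
      (8 / 3 * (Real.sqrt (2 - 4 / (n : ℝ)) + 2 / (n : ℝ))) := by
  have hn5 : (5:ℝ) ≤ (n:ℝ) := by exact_mod_cast hn
  have hnpos : (0:ℝ) < (n:ℝ) := by linarith
  have h1 : 4 / (n:ℝ) ≤ 1 := by
    rw [div_le_one hnpos]; linarith
  have h0 : (0:ℝ) ≤ 2 - 4 / (n:ℝ) := by linarith
  set s := Real.sqrt (2 - 4 / (n:ℝ)) with hsdef
  have hsq : s ^ 2 = 2 - 4 / (n:ℝ) := Real.sq_sqrt h0
  have hs1 : 1 ≤ s := by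
    rw [hsdef, show (1:ℝ) = Real.sqrt 1 by simp]
    exact Real.sqrt_le_sqrt (by linarith)
  constructor
  · refine ⟨(4 * s - 4) / 3, by simp [Set.mem_Ici]; linarith, ?_⟩
    have hden : (4 : ℝ) + 3 * ((4 * s - 4) / 3) = 4 * s := by ring
    simp only
    rw [div_eq_iff (by rw [hden]; linarith)]
    have hn2 : (n:ℝ)^2 * s^2 = 2*(n:ℝ)^2 - 4*(n:ℝ) := by
      have := hsq
      field_simp at this ⊢
      nlinarith [this]
    field_simp
    ring_nf
    nlinarith [hn2]
  · rintro y ⟨α, hα, rfl⟩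
    simp only [Set.mem_Ici] at hα
    simp only
    rw [le_div_iff₀ (by linarith)]
    have key : (4 + 3*α - 4*s)^2
        = 3*(16 + 8*(1 + 2/(n:ℝ))*α + 3*α^2) - 3*(8/3*(s + 2/(n:ℝ))*(4 + 3*α)) := by
      have hne : (n:ℝ) ≠ 0 := ne_of_gt hnpos
      have hsqn : (n:ℝ) * s^2 = 2*(n:ℝ) - 4 := by
        rw [hsq]; field_simp
      field_simp
      linear_combination (16:ℝ) * hsqn
    nlinarith [sq_nonneg (4 + 3*α - 4*s), key]
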